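/- For all n ≥ 1 and n' with 1 ≤ n' ≤ n, and all m ≥ 1 with n ≥ m: μ*(n+n', m+1) ≤ μ*(n,m) + n', where μ*(k,m) is the minimum over k×k matrices over 𝔽₂ with all diagonal entries 1 and every column of Hamming weight exactly m, of max_x |W·x|. -/

import Mathlib

set_option maxHeartbeats 1000000


/-- `μ*(n,m)`: minimum over matrices with unit diagonal and column weights
exactly `m` of `max_x |W·x|`. -/
noncomputable def muStar (n m : ℕ) : ℕ :=
  sInf {k : ℕ | ∃ W : Matrix (Fin n) (Fin n) (ZMod 2),
    (∀ i, W i i = 1) ∧ (∀ j, hammingNorm (fun i => W i j) = m) ∧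
    k = Finset.univ.sup fun x : Fin n → ZMod 2 => hammingNorm (W.mulVec x)}

section Helpers

variable {α β γ : Type*} [Fintype α] [Fintype β] [DecidableEq γ] [Zero γ]

lemma hn_comp_equiv (e : β ≃ α) (f : α → γ) :
    hammingNorm (fun b => f (e b)) = hammingNorm f := by
  unfold hammingNorm
  rw [← Finset.card_map e.toEmbedding]
  congr 1
  ext a
  simp only [Finset.mem_map, Finset.mem_filter, Finset.mem_univ, true_and,
    Equiv.coe_toEmbedding]
  constructor
  · rintro ⟨b, hb, rfl⟩; exact hb
  · intro ha; exact ⟨e.symm a, by simpa using ha, by simp⟩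

lemma hn_sum (f : α ⊕ β → γ) :
    hammingNorm f
      = hammingNorm (fun a => f (Sum.inl a)) + hammingNorm (fun b => f (Sum.inr b)) := by
  unfold hammingNorm
  rw [← Finset.card_toLeft_add_card_toRight
    (u := Finset.univ.filter (fun x => f x ≠ 0))]
  congr 1
  · congr 1; ext x; simp
  · congr 1; ext x; simp

end Helpers

/-- `μ*(n+n', m+1) ≤ μ*(n,m) + n'` for `1 ≤ n' ≤ n` and `1 ≤ m ≤ n`. -/
theorem muStar_step (n n' m : ℕ) (hn' : 1 ≤ n') (hn'n : n' ≤ n)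
    (hm : 1 ≤ m) (hmn : m ≤ n) :
    muStar (n + n') (m + 1) ≤ muStar n m + n' := by
  have hn : 0 < n := le_trans hn' hn'n
  haveI : NeZero n := ⟨hn.ne'⟩
  have hfil : (Finset.univ.filter fun k : Fin n => (k : ℕ) < m).card = m := by
    rw [show (Finset.univ.filter fun k : Fin n => (k : ℕ) < m)
        = Finset.univ.map (Fin.castLEEmb hmn) by
      ext k
      simp only [Finset.mem_filter, Finset.mem_univ, true_and, Finset.mem_map,
        Fin.castLEEmb_apply]
      constructor
      · intro hk; exact ⟨⟨k, hk⟩, rfl⟩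
      · rintro ⟨j, rfl⟩; exact j.isLt]
    simp
  have hkey : hammingNorm (fun k : Fin n => if (k : ℕ) < m then (1 : ZMod 2) else 0) = m := by
    unfold hammingNorm
    rw [show (Finset.univ.filter fun k : Fin n =>
        (fun k : Fin n => if (k : ℕ) < m then (1 : ZMod 2) else 0) k ≠ 0)
        = Finset.univ.filter fun k : Fin n => (k : ℕ) < m by
      ext k
      by_cases h : (k : ℕ) < m <;> simp [h]]
    exact hfil
  have hSne : (Set.Nonempty {k : ℕ | ∃ W : Matrix (Fin n) (Fin n) (ZMod 2),
      (∀ i, W i i = 1) ∧ (∀ j, hammingNorm (fun i => W i j) = m) ∧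
      k = Finset.univ.sup fun x : Fin n → ZMod 2 => hammingNorm (W.mulVec x)}) := by
    refine ⟨_, (fun i j => if ((i - j : Fin n) : ℕ) < m then 1 else 0), ?_, ?_, rfl⟩
    · intro i
      show (if ((i - i : Fin n) : ℕ) < m then (1 : ZMod 2) else 0) = 1
      rw [sub_self, if_pos (by simp; omega)]
    · intro j
      calc hammingNorm (fun i : Fin n =>
              (fun i j : Fin n => if ((i - j : Fin n) : ℕ) < m then (1 : ZMod 2) else 0) i j)
          = hammingNorm (fun k : Fin n => if (k : ℕ) < m then (1 : ZMod 2) else 0) :=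
            hn_comp_equiv (Equiv.subRight j) (fun k : Fin n => if (k : ℕ) < m then (1 : ZMod 2) else 0)
        _ = m := hkey
  obtain ⟨W, hWdiag, hWcol, hWval⟩ := Nat.sInf_mem hSne
  rw [show sInf {k : ℕ | ∃ W : Matrix (Fin n) (Fin n) (ZMod 2),
      (∀ i, W i i = 1) ∧ (∀ j, hammingNorm (fun i => W i j) = m) ∧
      k = Finset.univ.sup fun x : Fin n → ZMod 2 => hammingNorm (W.mulVec x)}
      = muStar n m from rfl] at hWval
  set μ := muStar n m with hμ
  -- the big matrix on the sum type
  set B : Matrix (Fin n ⊕ Fin n') (Fin n ⊕ Fin n') (ZMod 2) := fun i j =>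
    match i, j with
    | Sum.inl i, Sum.inl j => W i j
    | Sum.inl i, Sum.inr j' => W i (Fin.castLE hn'n j')
    | Sum.inr i', Sum.inl j => if (j : ℕ) % n' = (i' : ℕ) then 1 else 0
    | Sum.inr i', Sum.inr j' => if i' = j' then 1 else 0 with hB
  set e : Fin n ⊕ Fin n' ≃ Fin (n + n') := finSumFinEquiv with he
  have hstep : muStar (n + n') (m + 1)
      ≤ Finset.univ.sup fun x : Fin (n + n') → ZMod 2 =>
          hammingNorm ((B.submatrix e.symm e.symm).mulVec x) := by
    apply Nat.sInf_le
    refine ⟨B.submatrix e.symm e.symm, ?_, ?_, rfl⟩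
    · intro i
      rcases h : e.symm i with a | b
      · show B (e.symm i) (e.symm i) = 1; rw [h]; exact hWdiag a
      · show B (e.symm i) (e.symm i) = 1; rw [h]; simp [hB]
    · intro j
      have step : hammingNorm (fun i => (B.submatrix e.symm e.symm) i j)
          = hammingNorm (fun k => B k (e.symm j)) :=
        hn_comp_equiv e.symm (fun k => B k (e.symm j))
      rw [step, hn_sum]
      rcases e.symm j with a | b
      · have h1 : hammingNorm (fun i : Fin n => B (Sum.inl i) (Sum.inl a)) = m := hWcol a
        have h2 : hammingNorm (fun i' : Fin n' => B (Sum.inr i') (Sum.inl a)) = 1 := by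
          unfold hammingNorm
          rw [show (Finset.univ.filter fun i' : Fin n' =>
              (fun i' : Fin n' => B (Sum.inr i') (Sum.inl a)) i' ≠ 0)
              = {(⟨(a : ℕ) % n', Nat.mod_lt _ hn'⟩ : Fin n')} by
            ext i'
            simp only [Finset.mem_filter, Finset.mem_univ, true_and,
              Finset.mem_singleton, hB]
            constructor
            · intro h
              by_cases hc : (a : ℕ) % n' = (i' : ℕ)
              · exact Fin.ext hc.symm
              · simp [hc] at h
            · rintro rfl; simp]
          simp
        rw [h1, h2]
      · have h1 : hammingNorm (fun i : Fin n => B (Sum.inl i) (Sum.inr b)) = m :=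
          hWcol (Fin.castLE hn'n b)
        have h2 : hammingNorm (fun i' : Fin n' => B (Sum.inr i') (Sum.inr b)) = 1 := by
          unfold hammingNorm
          rw [show (Finset.univ.filter fun i' : Fin n' =>
              (fun i' : Fin n' => B (Sum.inr i') (Sum.inr b)) i' ≠ 0) = {b} by
            ext i'
            simp only [Finset.mem_filter, Finset.mem_univ, true_and,
              Finset.mem_singleton, hB]
            constructor
            · intro h; by_contra hc; simp [hc] at h
            · rintro rfl; simp]
          simp
        rw [h1, h2]
  refine le_trans hstep ?_
  apply Finset.sup_le
  intro x _
  rw [Matrix.submatrix_mulVec_equiv]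
  simp only [Equiv.symm_symm]
  refine le_trans (le_of_eq (hn_comp_equiv e.symm (B.mulVec (x ∘ e)))) ?_
  rw [hn_sum]
  set u : Fin n ⊕ Fin n' → ZMod 2 := x ∘ e with hu
  set v : Fin n → ZMod 2 := fun j =>
    u (Sum.inl j) + if h : (j : ℕ) < n' then u (Sum.inr ⟨j, h⟩) else 0 with hv
  have htop : (fun i : Fin n => B.mulVec u (Sum.inl i)) = W.mulVec v := by
    funext i
    simp only [Matrix.mulVec, dotProduct]
    rw [Fintype.sum_sum_type]
    simp only [hB, hv, mul_add]
    rw [Finset.sum_add_distrib]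
    congr 1
    symm
    rw [← Finset.sum_subset (Finset.subset_univ
      ((Finset.univ : Finset (Fin n')).map (Fin.castLEEmb hn'n)))
      (by
        intro j _ hj
        have hjn : ¬ (j : ℕ) < n' := by
          intro hc
          exact hj (Finset.mem_map.2 ⟨⟨j, hc⟩, Finset.mem_univ _, rfl⟩)
        simp [hjn])]
    rw [Finset.sum_map]
    apply Finset.sum_congr rfl
    intro j' _
    simp only [Fin.castLEEmb_apply]
    rw [dif_pos (show ((Fin.castLE hn'n j' : Fin n) : ℕ) < n' by simpa using j'.isLt)]
    congr 1
  have h1 : hammingNorm (fun i : Fin n => B.mulVec u (Sum.inl i)) ≤ μ := by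
    rw [htop, hWval]
    exact Finset.le_sup (f := fun x : Fin n → ZMod 2 => hammingNorm (W.mulVec x)) (Finset.mem_univ v)
  have h2 : hammingNorm (fun i' : Fin n' => B.mulVec u (Sum.inr i')) ≤ n' := by
    calc hammingNorm (fun i' : Fin n' => B.mulVec u (Sum.inr i'))
        ≤ Fintype.card (Fin n') := hammingNorm_le_card_fintype
      _ = n' := Fintype.card_fin n'
  omega
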